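/- For every n ≥ 1, if the linear orders L₀, L₁, …, L_{n−1} are each order-isomorphic to the linguage of a deterministic finite automaton over {0,1}, then so is their n-ary shuffle Ξ(L₀, L₁, …, L_{n−1}). -/

import Mathlib

/-- A deterministic finite automaton with a partial transition function. -/
structure PDFA (σ : Type) where
  /-- the (finite) set of states -/
  State : Type
  finState : Finite State
  /-- the start state -/
  start : State
  /-- the set of accept states -/
  accept : Set State
  /-- the partial transition function -/
  step : State → σ → Option State

namespace PDFA

variable {σ : Type} (M : PDFA σ)

/-- The extended (partial) transition function `δ̂`, reading the word left to right. -/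
def run (q : M.State) (w : List σ) : Option M.State :=
  w.foldlM (fun q a => M.step q a) q

/-- The language accepted by the automaton. -/
def lang : Set (List σ) := {w | ∃ q ∈ M.accept, M.run M.start w = some q}

end PDFA

/-- The inorder relation `<₂` on finite binary words: `x <₂ y` iff, writing
`x = w·x'`, `y = w·y'` with `w` the longest common prefix, either `x'` begins
with `0`(=`false`) or `y'` begins with `1`(=`true`). -/
def inlt : List Bool → List Bool → Prop
  | [], [] => False
  | [], b :: _ => b = true
  | a :: _, [] => a = false
  | a :: x, b :: y => (a = false ∧ b = true) ∨ (a = b ∧ inlt x y)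

/-- `(L, r)` is order-isomorphic to the linguage `(L(M), <₂)` of some
deterministic finite automaton `M` over `{0,1}`. -/
def IsLinguageOf (L : Type) (r : L → L → Prop) : Prop :=
  ∃ M : PDFA Bool, Nonempty (r ≃r fun x y : M.lang => inlt x.1 y.1)

theorem inlt_irrefl : ∀ x, ¬ inlt x x
  | [] => fun h => h
  | a :: x => by
    intro h
    rcases h with ⟨h1, h2⟩ | ⟨_, h⟩
    · simp [h1] at h2
    · exact inlt_irrefl x h

theorem inlt_trans : ∀ x y z, inlt x y → inlt y z → inlt x z
  | [], [], _, h, _ => h.elim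
  | [], b :: y, [], _, h2 => by simp [inlt] at *; simp [h2] at *
  | [], b :: y, c :: z, h1, h2 => by
    simp only [inlt] at *
    subst h1
    rcases h2 with ⟨h, _⟩ | ⟨h, _⟩
    · simp at h
    · exact h.symm
  | a :: x, [], [], _, h2 => h2.elim
  | a :: x, [], c :: z, h1, h2 => by
    simp only [inlt] at *
    exact Or.inl ⟨h1, h2⟩
  | a :: x, b :: y, [], h1, h2 => by
    simp only [inlt] at *
    rcases h1 with ⟨h, h'⟩ | ⟨h, _⟩
    · simp [h2] at h'
    · exact h.trans h2
  | a :: x, b :: y, c :: z, h1, h2 => by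
    simp only [inlt] at *
    rcases h1 with ⟨ha, hb⟩ | ⟨hab, h1'⟩
    · rcases h2 with ⟨_, hc⟩ | ⟨hbc, _⟩
      · exact Or.inl ⟨ha, hc⟩
      · exact Or.inl ⟨ha, hbc ▸ hb⟩
    · rcases h2 with ⟨hb, hc⟩ | ⟨hbc, h2'⟩
      · exact Or.inl ⟨hab ▸ hb, hc⟩
      · exact Or.inr ⟨hab.trans hbc, inlt_trans x y z h1' h2'⟩

theorem inlt_trichot : ∀ x y, inlt x y ∨ x = y ∨ inlt y x
  | [], [] => Or.inr (Or.inl rfl)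
  | [], b :: y => by cases b <;> simp [inlt]
  | a :: x, [] => by cases a <;> simp [inlt]
  | a :: x, b :: y => by
    rcases inlt_trichot x y with h | h | h
    · cases a <;> cases b <;> simp [inlt, h]
    · subst h
      cases a <;> cases b <;> simp [inlt]
    · cases a <;> cases b <;> simp [inlt, h]

theorem inlt_isSTO : IsStrictTotalOrder (List Bool) inlt where
  trichotomous a b h1 h2 := ((inlt_trichot a b).resolve_left h1).resolve_right h2
  irrefl := inlt_irrefl
  trans := inlt_trans

noncomputable def inltLinearOrder : LinearOrder (List Bool) :=
  haveI := inlt_isSTO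
  haveI : DecidableRel inlt := Classical.decRel _
  linearOrderOfSTO inlt

theorem inltLinearOrder_lt : (inltLinearOrder.lt : List Bool → List Bool → Prop) = inlt := rfl

def enc : List Bool → List Bool
  | [] => []
  | b :: a => b :: b :: enc a

theorem inlt_append_true : ∀ (x l : List Bool), inlt x (x ++ true :: l)
  | [], l => rfl
  | a :: x, l => Or.inr ⟨rfl, inlt_append_true x l⟩

theorem inlt_append_false : ∀ (x l : List Bool), inlt (x ++ false :: l) x
  | [], l => rfl
  | a :: x, l => Or.inr ⟨rfl, inlt_append_false x l⟩

theorem inlt_replicate : ∀ (t : List Bool) (k : ℕ), t.length < k →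
    inlt (List.replicate k false) t
  | [], k, hk => by
    obtain ⟨k, rfl⟩ : ∃ k', k = k' + 1 := ⟨k - 1, by omega⟩
    simp [List.replicate_succ, inlt]
  | b :: t, k, hk => by
    obtain ⟨k, rfl⟩ : ∃ k', k = k' + 1 := ⟨k - 1, by omega⟩
    rw [List.replicate_succ]
    cases b
    · exact Or.inr ⟨rfl, inlt_replicate t k (by simpa using Nat.lt_of_succ_lt_succ hk)⟩
    · exact Or.inl ⟨rfl, rfl⟩

theorem inlt_mid : ∀ (x y : List Bool), inlt x y → ∀ k : ℕ, y.length < k →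
    inlt (x ++ true :: List.replicate k false) y
  | [], [], h, _, _ => h.elim
  | [], b :: y, h, k, hk => by
    have hb : b = true := h
    subst hb
    exact Or.inr ⟨rfl, inlt_replicate y k (by simp at hk; omega)⟩
  | a :: x, [], h, k, hk => h
  | a :: x, b :: y, h, k, hk => by
    rcases h with ⟨ha, hb⟩ | ⟨hab, h'⟩
    · exact Or.inl ⟨ha, hb⟩
    · exact Or.inr ⟨hab, inlt_mid x y h' k (by simp at hk; omega)⟩

theorem inlt_enc_iff : ∀ (a b w v : List Bool),
    inlt (enc a ++ false :: true :: w) (enc b ++ false :: true :: v) ↔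
      inlt a b ∨ (a = b ∧ inlt w v)
  | [], [], w, v => by simp [enc, inlt]
  | [], y :: b, w, v => by cases y <;> simp [enc, inlt]
  | x :: a, [], w, v => by cases x <;> simp [enc, inlt]
  | x :: a, y :: b, w, v => by
    have IH := inlt_enc_iff a b w v
    cases x <;> cases y <;> simp [enc, inlt, IH] <;> tauto

theorem enc_sep_inj : ∀ (a b w v : List Bool),
    enc a ++ false :: true :: w = enc b ++ false :: true :: v → a = b ∧ w = v
  | [], [], w, v, h => by simpa [enc] using h
  | [], y :: b, w, v, h => by
    simp only [enc, List.cons_append, List.nil_append] at h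
    injection h with h1 h2
    injection h2 with h3 _
    subst h1; simp at h3
  | x :: a, [], w, v, h => by
    simp only [enc, List.cons_append, List.nil_append] at h
    injection h with h1 h2
    injection h2 with h3 _
    subst h1; simp at h3
  | x :: a, y :: b, w, v, h => by
    simp only [enc, List.cons_append] at h
    injection h with h1 h2
    injection h2 with _ h3
    obtain ⟨rfl, rfl⟩ := enc_sep_inj a b w v h3
    exact ⟨by rw [h1], rfl⟩

open Fin.NatCast Fin.CommRing

theorem exists_color_between {n : ℕ} [NeZero n] {x y : List Bool} (h : inlt x y) (i : Fin n) :
    ∃ z, inlt x z ∧ inlt z y ∧ (z.length : Fin n) = i := by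
  have hn : 0 < n := Nat.pos_of_ne_zero (NeZero.ne n)
  set a := x.length + 1 with ha
  set m := y.length with hm
  set k := (n - a % n) + i.val + n * m with hkdef
  have hk : m < k := by
    have := Nat.mod_lt a hn
    have := Nat.le_mul_of_pos_left m hn
    omega
  refine ⟨x ++ true :: List.replicate k false, inlt_append_true x _, inlt_mid x y h k hk, ?_⟩
  have hlen : (x ++ true :: List.replicate k false).length = a + k := by simp [ha]; omega
  rw [hlen]
  have h1 := Nat.div_add_mod a n
  have h2 : a % n < n := Nat.mod_lt a hn
  have h3 : a + k = n * (a / n) + n * m + n + i.val := by omega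
  rw [h3]
  push_cast
  simp [Fin.natCast_self, Fin.cast_val_eq_self]


open Order

section ColoredBF

variable {α β γ : Type*} [LinearOrder α] [LinearOrder β]

/-- The colored between-finsets condition. -/
def BetweenFinsets (c : β → γ) : Prop :=
  ∀ (i : γ) (lo hi : Finset β), (∀ x ∈ lo, ∀ y ∈ hi, x < y) →
    ∃ m, c m = i ∧ (∀ x ∈ lo, x < m) ∧ ∀ y ∈ hi, m < y

theorem betweenFinsets_of_dense (c : β → γ)
    (dense : ∀ (i : γ) (a b : β), a < b → ∃ m, a < m ∧ m < b ∧ c m = i)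
    (above : ∀ (i : γ) (a : β), ∃ m, a < m ∧ c m = i)
    (below : ∀ (i : γ) (a : β), ∃ m, m < a ∧ c m = i)
    (nonem : ∀ i : γ, ∃ m, c m = i) : BetweenFinsets c := by
  intro i lo hi lo_lt_hi
  by_cases nlo : lo.Nonempty
  · by_cases nhi : hi.Nonempty
    · obtain ⟨m, h1, h2, h3⟩ :=
        dense i _ _ (lo_lt_hi _ (Finset.max'_mem _ nlo) _ (Finset.min'_mem _ nhi))
      exact ⟨m, h3, fun x hx => lt_of_le_of_lt (Finset.le_max' lo x hx) h1,
        fun y hy => lt_of_lt_of_le h2 (Finset.min'_le hi y hy)⟩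
    · obtain ⟨m, h1, h3⟩ := above i (Finset.max' lo nlo)
      exact ⟨m, h3, fun x hx => lt_of_le_of_lt (Finset.le_max' lo x hx) h1,
        fun y hy => (nhi ⟨y, hy⟩).elim⟩
  · by_cases nhi : hi.Nonempty
    · obtain ⟨m, h1, h3⟩ := below i (Finset.min' hi nhi)
      exact ⟨m, h3, fun x hx => (nlo ⟨x, hx⟩).elim,
        fun y hy => lt_of_lt_of_le h1 (Finset.min'_le hi y hy)⟩
    · obtain ⟨m, h3⟩ := nonem i
      exact ⟨m, h3, fun x hx => (nlo ⟨x, hx⟩).elim, fun y hy => (nhi ⟨y, hy⟩).elim⟩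

variable (cA : α → γ) (cB : β → γ)

/-- Colored partial isomorphisms. -/
def CPIso : Type _ :=
  { f : Finset (α × β) // (∀ p ∈ f, cB p.2 = cA p.1) ∧
      ∀ p ∈ f, ∀ q ∈ f, cmp (Prod.fst p) (Prod.fst q) = cmp (Prod.snd p) (Prod.snd q) }

namespace CPIso

instance : Inhabited (CPIso cA cB) :=
  ⟨⟨∅, fun _ h => (Finset.notMem_empty _ h).elim,
    fun _ h => (Finset.notMem_empty _ h).elim⟩⟩

instance : Preorder (CPIso cA cB) := Subtype.preorder _

variable {cA cB}

theorem exists_across (hB : BetweenFinsets cB) (f : CPIso cA cB) (a : α) :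
    ∃ b : β, cB b = cA a ∧ ∀ p ∈ f.val, cmp (Prod.fst p) a = cmp (Prod.snd p) b := by
  by_cases h : ∃ b, (a, b) ∈ f.val
  · obtain ⟨b, hb⟩ := h
    exact ⟨b, f.prop.1 _ hb, fun p hp => f.prop.2 _ hp _ hb⟩
  have : ∀ x ∈ (f.val.filter fun p : α × β => p.fst < a).image Prod.snd,
      ∀ y ∈ (f.val.filter fun p : α × β => a < p.fst).image Prod.snd, x < y := by
    intro x hx y hy
    rw [Finset.mem_image] at hx hy
    rcases hx with ⟨p, hp1, rfl⟩
    rcases hy with ⟨q, hq1, rfl⟩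
    rw [Finset.mem_filter] at hp1 hq1
    rw [← lt_iff_lt_of_cmp_eq_cmp (f.prop.2 _ hp1.1 _ hq1.1)]
    exact lt_trans hp1.right hq1.right
  obtain ⟨b, hbc, hb1, hb2⟩ := hB (cA a) _ _ this
  refine ⟨b, hbc, ?_⟩
  rintro ⟨p1, p2⟩ hp
  have : p1 ≠ a := fun he => h ⟨p2, he ▸ hp⟩
  cases' lt_or_gt_of_ne this with hl hr
  · have : p1 < a ∧ p2 < b :=
      ⟨hl, hb1 _ (Finset.mem_image.mpr ⟨(p1, p2), Finset.mem_filter.mpr ⟨hp, hl⟩, rfl⟩)⟩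
    rw [← cmp_eq_lt_iff, ← cmp_eq_lt_iff] at this
    exact this.1.trans this.2.symm
  · have : a < p1 ∧ b < p2 :=
      ⟨hr, hb2 _ (Finset.mem_image.mpr ⟨(p1, p2), Finset.mem_filter.mpr ⟨hp, hr⟩, rfl⟩)⟩
    rw [← cmp_eq_gt_iff, ← cmp_eq_gt_iff] at this
    exact this.1.trans this.2.symm

/-- Swap a colored partial iso. -/
def comm (f : CPIso cA cB) : CPIso cB cA :=
  ⟨f.val.image (Equiv.prodComm α β), by
    constructor
    · intro p hp
      rw [Finset.mem_image] at hp
      obtain ⟨q, hq, rfl⟩ := hp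
      exact (f.prop.1 q hq).symm
    · intro p hp q hq
      rw [Finset.mem_image] at hp hq
      obtain ⟨p', hp', rfl⟩ := hp
      obtain ⟨q', hq', rfl⟩ := hq
      exact (f.prop.2 p' hp' q' hq').symm⟩

theorem comm_comm_val (f : CPIso cA cB) : f.comm.comm.val = f.val := by
  simp only [comm, Finset.image_image]
  ext p
  simp

/-- The set of colored partial isos defined at `a : α`. -/
def definedAtLeft (hB : BetweenFinsets cB) (a : α) : Cofinal (CPIso cA cB) where
  carrier := {f | ∃ b : β, (a, b) ∈ f.val}
  isCofinal f := by
    obtain ⟨b, hbc, a_b⟩ := exists_across hB f a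
    refine ⟨⟨insert (a, b) f.val, ?_, ?_⟩, ⟨b, Finset.mem_insert_self _ _⟩,
      Finset.subset_insert _ _⟩
    · intro p hp
      rw [Finset.mem_insert] at hp
      rcases hp with rfl | pf
      · exact hbc
      · exact f.prop.1 _ pf
    · intro p hp q hq
      rw [Finset.mem_insert] at hp hq
      rcases hp with rfl | pf <;> rcases hq with rfl | qf
      · simp only [cmp_self_eq_eq]
      · rw [cmp_eq_cmp_symm]
        exact a_b _ qf
      · exact a_b _ pf
      · exact f.prop.2 _ pf _ qf

/-- The set of colored partial isos defined at `b : β`. -/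
def definedAtRight (hA : BetweenFinsets cA) (b : β) : Cofinal (CPIso cA cB) where
  carrier := {f | ∃ a, (a, b) ∈ f.val}
  isCofinal f := by
    rcases (definedAtLeft (cA := cB) (cB := cA) hA b).isCofinal f.comm with ⟨f', ⟨a, ha⟩, hl⟩
    refine ⟨f'.comm, ⟨a, ?_⟩, ?_⟩
    · simp only [comm, Finset.mem_image]
      exact ⟨(b, a), ha, rfl⟩
    · have : f.comm.comm.val ⊆ f'.comm.val := Finset.image_subset_image hl
      rwa [comm_comm_val] at this

/-- Pick the image of `a` in an ideal meeting `definedAtLeft`. -/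
noncomputable def funOfIdeal (hB : BetweenFinsets cB) (a : α) (I : Ideal (CPIso cA cB)) :
    (∃ f, f ∈ definedAtLeft hB a ∧ f ∈ I) → { b // ∃ f ∈ I, (a, b) ∈ Subtype.val f } :=
  Classical.indefiniteDescription _ ∘ fun ⟨f, ⟨b, hb⟩, hf⟩ => ⟨b, f, hf, hb⟩

/-- Pick the preimage of `b` in an ideal meeting `definedAtRight`. -/
noncomputable def invOfIdeal (hA : BetweenFinsets cA) (b : β) (I : Ideal (CPIso cA cB)) :
    (∃ f, f ∈ definedAtRight hA b ∧ f ∈ I) → { a // ∃ f ∈ I, (a, b) ∈ Subtype.val f } :=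
  Classical.indefiniteDescription _ ∘ fun ⟨f, ⟨a, ha⟩, hf⟩ => ⟨a, f, hf, ha⟩

end CPIso

theorem exists_orderIso_colored [Countable α] [Countable β]
    (hA : BetweenFinsets cA) (hB : BetweenFinsets cB) :
    ∃ e : α ≃o β, ∀ a, cB (e a) = cA a := by
  cases nonempty_encodable α
  cases nonempty_encodable β
  let to_cofinal : α ⊕ β → Cofinal (CPIso cA cB) := fun p =>
    Sum.recOn p (CPIso.definedAtLeft hB) (CPIso.definedAtRight hA)
  let our_ideal : Ideal (CPIso cA cB) := idealOfCofinals default to_cofinal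
  let F := fun a => CPIso.funOfIdeal hB a our_ideal
    (cofinal_meets_idealOfCofinals _ to_cofinal (Sum.inl a))
  let G := fun b => CPIso.invOfIdeal hA b our_ideal
    (cofinal_meets_idealOfCofinals _ to_cofinal (Sum.inr b))
  refine ⟨OrderIso.ofCmpEqCmp (fun a => (F a).val) (fun b => (G b).val) fun a b => ?_, fun a => ?_⟩
  · rcases (F a).prop with ⟨f, hf, ha⟩
    rcases (G b).prop with ⟨g, hg, hb⟩
    rcases our_ideal.directed _ hf _ hg with ⟨m, _, fm, gm⟩
    exact m.prop.2 (a, _) (fm ha) (_, b) (gm hb)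
  · rcases (F a).prop with ⟨f, _, ha⟩
    exact f.prop.1 _ ha

end ColoredBF

section Shuffle

variable {n : ℕ} [NeZero n] (M : Fin n → PDFA Bool)

inductive ShState (n : ℕ) (M : Fin n → PDFA Bool) : Type
  | even : Fin n → ShState n M
  | mid : Fin n → Bool → ShState n M
  | sim : (i : Fin n) → (M i).State → ShState n M

instance : Finite (ShState n M) := by
  haveI : ∀ i, Finite (M i).State := fun i => (M i).finState
  let f : ShState n M → (Fin n) ⊕ (Fin n × Bool) ⊕ (Σ i : Fin n, (M i).State) := fun s =>
    match s with
    | .even k => Sum.inl k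
    | .mid k b => Sum.inr (Sum.inl (k, b))
    | .sim i q => Sum.inr (Sum.inr ⟨i, q⟩)
  have hf : Function.Injective f := by
    rintro ⟨⟩ ⟨⟩ h <;> simp [f] at h <;> try (obtain ⟨rfl, h⟩ := h) <;> try subst h
    all_goals first | rfl | (obtain ⟨rfl, rfl⟩ := h; rfl)
  exact Finite.of_injective f hf

/-- The shuffle automaton. -/
def shuffleDFA : PDFA Bool where
  State := ShState n M
  finState := inferInstance
  start := .even 0
  accept := {s | ∃ i q, s = ShState.sim i q ∧ q ∈ (M i).accept}
  step s b :=
    match s, b with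
    | .even k, b => some (.mid k b)
    | .mid k false, false => some (.even (k + 1))
    | .mid k false, true => some (.sim k (M k).start)
    | .mid k true, true => some (.even (k + 1))
    | .mid k true, false => none
    | .sim i q, b => Option.map (ShState.sim i) ((M i).step q b)

theorem run_cons {σ : Type} (N : PDFA σ) (q : N.State) (b : σ) (w : List σ) :
    N.run q (b :: w) = (N.step q b).bind fun q' => N.run q' w := by
  simp [PDFA.run, List.foldlM]

theorem run_enc (k : Fin n) (a : List Bool) (z : List Bool) :
    (shuffleDFA M).run (.even k) (enc a ++ z) =
      (shuffleDFA M).run (.even (k + (a.length : Fin n))) z := by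
  induction a generalizing k with
  | nil => simp [enc]
  | cons b a ih =>
    have step1 : (shuffleDFA M).step (.even k) b = some (.mid k b) := rfl
    have step2 : (shuffleDFA M).step (.mid k b) b = some (.even (k + 1)) := by
      cases b <;> rfl
    rw [enc]
    simp only [List.cons_append]
    have e1 : (shuffleDFA M).run (.even k) (b :: b :: (enc a ++ z)) =
        (shuffleDFA M).run (.even (k + 1)) (enc a ++ z) := by
      cases b <;> rfl
    rw [e1, ih]
    congr 1
    simp only [List.length_cons]
    push_cast
    ring_nf
    rfl

theorem run_even_cons (k : Fin n) (b : Bool) (w : List Bool) :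
    (shuffleDFA M).run (.even k) (b :: w) = (shuffleDFA M).run (.mid k b) w := by
  exact run_cons (shuffleDFA M) _ _ w

theorem run_mid_same (k : Fin n) (b : Bool) (w : List Bool) :
    (shuffleDFA M).run (.mid k b) (b :: w) = (shuffleDFA M).run (.even (k + 1)) w := by
  cases b <;> exact run_cons (shuffleDFA M) _ _ w

theorem run_mid_sep (k : Fin n) (w : List Bool) :
    (shuffleDFA M).run (.mid k false) (true :: w) =
      (shuffleDFA M).run (.sim k (M k).start) w := by
  exact run_cons (shuffleDFA M) _ _ w

theorem run_mid_bad (k : Fin n) (w : List Bool) :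
    (shuffleDFA M).run (.mid k true) (false :: w) = none := by
  exact run_cons (shuffleDFA M) _ _ w

theorem run_sep (k : Fin n) (w : List Bool) :
    (shuffleDFA M).run (.even k) (false :: true :: w) =
      (shuffleDFA M).run (.sim k (M k).start) w := by
  rw [run_even_cons, run_mid_sep]

theorem run_sim (i : Fin n) (q : (M i).State) (w : List Bool) :
    (shuffleDFA M).run (.sim i q) w = Option.map (ShState.sim i) ((M i).run q w) := by
  induction w generalizing q with
  | nil => rfl
  | cons b w ih =>
    refine (run_cons (shuffleDFA M) _ _ _).trans ?_; rw [run_cons (M i)]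
    show (Option.map (ShState.sim i) ((M i).step q b)).bind _ = _
    cases h : (M i).step q b with
    | none => rfl
    | some q' => exact ih q'

theorem run_even_accept : ∀ (w : List Bool) (k : Fin n) (qf : ShState n M),
    qf ∈ (shuffleDFA M).accept → (shuffleDFA M).run (.even k) w = some qf →
    ∃ a v, w = enc a ++ false :: true :: v ∧ v ∈ (M (k + (a.length : Fin n))).lang
  | [], k, qf, hacc, hrun => by
    simp [PDFA.run] at hrun
    obtain ⟨i, q, h, -⟩ := hacc
    subst h
    cases hrun
  | [b], k, qf, hacc, hrun => by
    rw [run_even_cons] at hrun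
    simp [PDFA.run] at hrun
    obtain ⟨i, q, h, -⟩ := hacc
    subst h
    cases hrun
  | false :: false :: w, k, qf, hacc, hrun => by
    rw [run_even_cons, run_mid_same] at hrun
    obtain ⟨a, v, rfl, hv⟩ := run_even_accept w (k + 1) qf hacc hrun
    refine ⟨false :: a, v, rfl, ?_⟩
    have he : (k + (((false :: a).length : ℕ) : Fin n)) = (k + 1) + (a.length : Fin n) := by
      simp only [List.length_cons]
      push_cast
      ring
    rw [he]
    exact hv
  | true :: true :: w, k, qf, hacc, hrun => by
    rw [run_even_cons, run_mid_same] at hrun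
    obtain ⟨a, v, rfl, hv⟩ := run_even_accept w (k + 1) qf hacc hrun
    refine ⟨true :: a, v, rfl, ?_⟩
    have he : (k + (((true :: a).length : ℕ) : Fin n)) = (k + 1) + (a.length : Fin n) := by
      simp only [List.length_cons]
      push_cast
      ring
    rw [he]
    exact hv
  | false :: true :: w, k, qf, hacc, hrun => by
    rw [run_even_cons, run_mid_sep, run_sim] at hrun
    obtain ⟨q', hq', hq'2⟩ := Option.map_eq_some_iff.mp hrun
    obtain ⟨i, q, h, hq⟩ := hacc
    rw [← hq'2] at h
    cases h
    refine ⟨[], w, rfl, ?_⟩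
    have he : (k + ((([] : List Bool).length : ℕ) : Fin n)) = k := by
      simp
    rw [he]
    exact ⟨q', hq, hq'⟩
  | true :: false :: w, k, qf, hacc, hrun => by
    rw [run_even_cons, run_mid_bad] at hrun
    cases hrun

theorem mem_shuffle_lang_iff (w : List Bool) :
    w ∈ (shuffleDFA M).lang ↔
      ∃ a v, w = enc a ++ false :: true :: v ∧ v ∈ (M (a.length : Fin n)).lang := by
  constructor
  · rintro ⟨qf, hqf, hrun⟩
    obtain ⟨a, v, h1, h2⟩ := run_even_accept M w 0 qf hqf hrun
    exact ⟨a, v, h1, by rwa [zero_add] at h2⟩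
  · rintro ⟨a, v, rfl, qf, hqf, hrun⟩
    refine ⟨.sim _ qf, ⟨_, qf, rfl, hqf⟩, ?_⟩
    show (shuffleDFA M).run (.even 0) _ = _
    rw [run_enc, run_sep, run_sim]
    have hz : (0 : Fin n) + (a.length : Fin n) = (a.length : Fin n) := zero_add _
    rw [hz, hrun]
    rfl

end Shuffle

/-- Congruence of lexicographic sigma orders along relation isomorphisms. -/
noncomputable def relIsoSigmaLex {ι₁ ι₂ : Type*} {A : ι₁ → Type*} {B : ι₂ → Type*}
    {r₁ : ι₁ → ι₁ → Prop} {r₂ : ι₂ → ι₂ → Prop}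
    {s₁ : ∀ i, A i → A i → Prop} {s₂ : ∀ j, B j → B j → Prop}
    (e : r₁ ≃r r₂) (F : ∀ i, s₁ i ≃r s₂ (e i)) :
    Sigma.Lex r₁ s₁ ≃r Sigma.Lex r₂ s₂ where
  toEquiv := Equiv.ofBijective (fun p => ⟨e p.1, F p.1 p.2⟩) (by
    constructor
    · rintro ⟨i, x⟩ ⟨j, y⟩ hp
      obtain ⟨h1, h2⟩ := Sigma.mk.inj_iff.mp hp
      obtain rfl : i = j := e.injective h1
      exact congrArg (Sigma.mk i) ((F i).injective (eq_of_heq h2))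
    · rintro ⟨j, y⟩
      obtain ⟨i, rfl⟩ : ∃ i, e i = j := ⟨e.symm j, e.apply_symm_apply j⟩
      exact ⟨⟨i, (F i).symm y⟩, congrArg (Sigma.mk (e i)) ((F i).apply_symm_apply y)⟩)
  map_rel_iff' := by
    rintro ⟨i, x⟩ ⟨j, y⟩
    show Sigma.Lex r₂ s₂ ⟨e i, F i x⟩ ⟨e j, F j y⟩ ↔ Sigma.Lex r₁ s₁ ⟨i, x⟩ ⟨j, y⟩
    rw [Sigma.lex_iff, Sigma.lex_iff]
    dsimp only
    apply or_congr e.map_rel_iff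
    constructor
    · rintro ⟨h, hs⟩
      obtain rfl : i = j := e.injective h
      have hs' : s₂ (e i) (F i x) (F i y) := hs
      exact ⟨rfl, (F i).map_rel_iff.mp hs'⟩
    · rintro ⟨rfl, hs⟩
      have hs' : s₁ i x y := hs
      exact ⟨rfl, (F i).map_rel_iff.mpr hs'⟩

/-- For every `n ≥ 1`, if the linear orders `L₀, …, L_{n−1}` are each
order-isomorphic to the linguage of a DFA over `{0,1}`, then so is their `n`-ary
shuffle `Ξ(L₀, …, L_{n−1}) = Σ_{q ∈ ℚ} L_{χ(q)}`, where `χ : ℚ → {0, …, n−1}` is any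
coloring all of whose color classes are dense in `ℚ`. -/
theorem isLinguage_shuffle (n : ℕ) (hn : 1 ≤ n) (L : Fin n → Type)
    (r : ∀ i, L i → L i → Prop) (h : ∀ i, IsLinguageOf (L i) (r i))
    (χ : ℚ → Fin n) (hχ : ∀ i, ∀ a b : ℚ, a < b → ∃ q, a < q ∧ q < b ∧ χ q = i) :
    IsLinguageOf ((q : ℚ) × L (χ q)) (Sigma.Lex (· < ·) (fun q => r (χ q))) := by
  haveI : NeZero n := ⟨by omega⟩
  choose M e using h
  have e' : ∀ i, (r i) ≃r (fun x y : (M i).lang => inlt x.1 y.1) := fun i => (e i).some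
  letI : LinearOrder (List Bool) := inltLinearOrder
  set cB : List Bool → Fin n := fun a => ((a.length : ℕ) : Fin n) with hcB
  -- Colored density of ℚ
  have hQ : BetweenFinsets χ := by
    apply betweenFinsets_of_dense
    · exact fun i a b hab => hχ i a b hab
    · intro i a
      obtain ⟨q, h1, _, h3⟩ := hχ i a (a + 1) (lt_add_one a)
      exact ⟨q, h1, h3⟩
    · intro i a
      obtain ⟨q, _, h2, h3⟩ := hχ i (a - 1) a (by linarith)
      exact ⟨q, h2, h3⟩
    · intro i
      obtain ⟨q, _, _, h3⟩ := hχ i 0 1 one_pos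
      exact ⟨q, h3⟩
  -- Colored density of binary words
  have habove : ∀ (i : Fin n) (a : List Bool), ∃ m, inlt a m ∧ cB m = i := by
    intro i a
    obtain ⟨z, h1, _, h3⟩ := exists_color_between (inlt_append_true a []) i
    exact ⟨z, h1, h3⟩
  have hBf : BetweenFinsets cB := by
    apply betweenFinsets_of_dense
    · intro i a b hab
      obtain ⟨z, h1, h2, h3⟩ := exists_color_between (show inlt a b from hab) i
      exact ⟨z, h1, h2, h3⟩
    · exact habove
    · intro i a
      obtain ⟨z, _, h2, h3⟩ := exists_color_between (inlt_append_false a []) i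
      exact ⟨z, h2, h3⟩
    · intro i
      obtain ⟨z, _, h3⟩ := habove i []
      exact ⟨z, h3⟩
  obtain ⟨φ, hφ⟩ := exists_orderIso_colored χ cB hQ hBf
  refine ⟨shuffleDFA M, ⟨?_⟩⟩
  -- index iso
  let eRel : ((· < ·) : ℚ → ℚ → Prop) ≃r inlt := ⟨φ.toEquiv, φ.lt_iff_lt⟩
  -- fiber isos
  have F : ∀ q : ℚ, (r (χ q)) ≃r (fun x y : (M (cB (eRel q))).lang => inlt x.1 y.1) := fun q => by
    have hq : cB (eRel q) = χ q := hφ q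
    rw [hq]
    exact e' (χ q)
  have Λ := relIsoSigmaLex (s₁ := fun q => r (χ q))
    (s₂ := fun a : List Bool => fun x y : (M (cB a)).lang => inlt x.1 y.1) eRel F
  refine Λ.trans ?_
  -- the language iso
  refine ⟨Equiv.ofBijective
    (fun p => ⟨enc p.1 ++ false :: true :: p.2.1,
      (mem_shuffle_lang_iff M _).mpr ⟨p.1, p.2.1, rfl, p.2.2⟩⟩) ⟨?_, ?_⟩, ?_⟩
  · rintro ⟨a, x, hx⟩ ⟨b, y, hy⟩ hp
    obtain ⟨rfl, rfl⟩ := enc_sep_inj a b x y (congrArg Subtype.val hp)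
    rfl
  · rintro ⟨w, hw⟩
    obtain ⟨a, v, rfl, hv⟩ := (mem_shuffle_lang_iff M w).mp hw
    exact ⟨⟨a, v, hv⟩, rfl⟩
  · rintro ⟨a, x, hx⟩ ⟨b, y, hy⟩
    show inlt (enc a ++ false :: true :: x) (enc b ++ false :: true :: y) ↔ _
    rw [inlt_enc_iff, Sigma.lex_iff]
    constructor
    · rintro (hab | ⟨rfl, hxy⟩)
      · exact Or.inl hab
      · exact Or.inr ⟨rfl, hxy⟩
    · rintro (hab | ⟨hab, hxy⟩)
      · exact Or.inl hab
      · obtain rfl : a = b := hab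
        exact Or.inr ⟨rfl, hxy⟩
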